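/- Let A be an s×s real matrix and M a linear operator on Hilbert space H with ⟨Mu,u⟩ = 0 on D(M), and suppose A satisfies the coercivity condition with diagonal positive definite K = diag(k_i) and constant α > 0. If v, w ∈ D(M)^s satisfy w = v + τ (A ⊗ M) w, then ⟨w, (K A⁻¹ ⊗ Id) w⟩_{H^s} = ⟨w, (K A⁻¹ ⊗ Id) v⟩_{H^s}; consequently α·min_i(k_i)·‖w‖²_{H^s} ≤ ⟨w, (K A⁻¹ ⊗ Id) v⟩_{H^s} and ‖w‖_{H^s} ≤ C‖v‖_{H^s} for a constant C depending only on α, K and A⁻¹. -/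

import Mathlib

open Finset Matrix

private lemma psd_sum_inner_nonneg {H : Type*} [NormedAddCommGroup H] [InnerProductSpace ℝ H]
    {s : ℕ} {S : Matrix (Fin s) (Fin s) ℝ} (hS : S.PosSemidef) (w : Fin s → H) :
    0 ≤ ∑ i, ∑ j, S i j * (inner ℝ (w i) (w j) : ℝ) := by
  classical
  obtain ⟨R, hR⟩ : ∃ R : Matrix (Fin s) (Fin s) ℝ, S = star R * R := by
    open scoped Matrix.Norms.L2Operator MatrixOrder in
    exact CStarAlgebra.nonneg_iff_eq_star_mul_self.mp hS.nonneg
  have hS' : ∀ i j, S i j = ∑ l, R l i * R l j := by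
    intro i j
    rw [hR, Matrix.star_eq_conjTranspose, Matrix.mul_apply]
    simp [Matrix.conjTranspose_apply]
  calc ∑ i, ∑ j, S i j * (inner ℝ (w i) (w j) : ℝ)
      = ∑ i, ∑ j, ∑ l, (R l i * R l j) * (inner ℝ (w i) (w j) : ℝ) := by
        refine Finset.sum_congr rfl fun i _ => Finset.sum_congr rfl fun j _ => ?_
        rw [hS' i j, Finset.sum_mul]
    _ = ∑ i, ∑ l, ∑ j, (R l i * R l j) * (inner ℝ (w i) (w j) : ℝ) :=
        Finset.sum_congr rfl fun i _ => Finset.sum_comm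
    _ = ∑ l, ∑ i, ∑ j, (R l i * R l j) * (inner ℝ (w i) (w j) : ℝ) := Finset.sum_comm
    _ = ∑ l, (inner ℝ (∑ i, R l i • w i) (∑ j, R l j • w j) : ℝ) := by
        refine Finset.sum_congr rfl fun l _ => ?_
        rw [sum_inner]
        refine Finset.sum_congr rfl fun i _ => ?_
        rw [inner_sum]
        refine Finset.sum_congr rfl fun j _ => ?_
        rw [real_inner_smul_left, real_inner_smul_right]; ring
    _ ≥ 0 := Finset.sum_nonneg fun l _ => real_inner_self_nonneg

/-- A priori estimate for the Runge–Kutta stage equation `w = v + τ (A ⊗ M) w`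
under the coercivity condition `uᵀ K A⁻¹ u ≥ α uᵀ K u`:
`⟨w,(KA⁻¹⊗Id)w⟩ = ⟨w,(KA⁻¹⊗Id)v⟩`, hence
`α·(minᵢ kᵢ)·‖w‖² ≤ ⟨w,(KA⁻¹⊗Id)v⟩` and `‖w‖ ≤ C‖v‖`. -/
theorem RK_stage_coercivity_estimate
    {H : Type*} [NormedAddCommGroup H] [InnerProductSpace ℝ H] [CompleteSpace H]
    {s : ℕ} [NeZero s]
    (D : Submodule ℝ H) (M : H →ₗ[ℝ] H)
    (hM : ∀ u ∈ D, (inner ℝ (M u) u : ℝ) = 0)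
    (A : Matrix (Fin s) (Fin s) ℝ) (hA : IsUnit A)
    (k : Fin s → ℝ) (hk : ∀ i, 0 < k i)
    (α : ℝ) (hα : 0 < α)
    (hcoer : ∀ u : Fin s → ℝ,
      α * (u ⬝ᵥ (Matrix.diagonal k *ᵥ u)) ≤
        u ⬝ᵥ ((Matrix.diagonal k * A⁻¹) *ᵥ u))
    (τ : ℝ) (hτ : 0 < τ) :
    (∀ v w : Fin s → H, (∀ i, v i ∈ D) → (∀ i, w i ∈ D) →
      (∀ i, w i = v i + τ • ∑ j, A i j • M (w j)) →
      (∑ i, (inner ℝ (w i) (∑ j, (Matrix.diagonal k * A⁻¹) i j • w j) : ℝ)) =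
          (∑ i, (inner ℝ (w i) (∑ j, (Matrix.diagonal k * A⁻¹) i j • v j) : ℝ)) ∧
        α * (Finset.univ.inf' Finset.univ_nonempty k) * (∑ i, ‖w i‖ ^ 2) ≤
          (∑ i, (inner ℝ (w i) (∑ j, (Matrix.diagonal k * A⁻¹) i j • v j) : ℝ))) ∧
      ∃ C > 0, ∀ v w : Fin s → H, (∀ i, v i ∈ D) → (∀ i, w i ∈ D) →
        (∀ i, w i = v i + τ • ∑ j, A i j • M (w j)) →
        Real.sqrt (∑ i, ‖w i‖ ^ 2) ≤ C * Real.sqrt (∑ i, ‖v i‖ ^ 2) := by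
  set B := Matrix.diagonal k * A⁻¹ with hBdef
  set m := Finset.univ.inf' Finset.univ_nonempty k with hmdef
  have hAdet : IsUnit A.det := (Matrix.isUnit_iff_isUnit_det A).mp hA
  have hBA : B * A = Matrix.diagonal k := by
    rw [hBdef, Matrix.mul_assoc, Matrix.nonsing_inv_mul A hAdet, Matrix.mul_one]
  -- expansion of the bilinear form
  have hexp : ∀ (w u : Fin s → H),
      (∑ i, (inner ℝ (w i) (∑ j, B i j • u j) : ℝ)) =
        ∑ i, ∑ j, B i j * (inner ℝ (w i) (u j) : ℝ) := by
    intro w u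
    refine Finset.sum_congr rfl fun i _ => ?_
    rw [inner_sum]
    exact Finset.sum_congr rfl fun j _ => real_inner_smul_right _ _ _
  -- quadratic form expansion for real vectors
  have hquad : ∀ (N : Matrix (Fin s) (Fin s) ℝ) (x : Fin s → ℝ),
      x ⬝ᵥ (N *ᵥ x) = ∑ i, ∑ j, N i j * (x i * x j) := by
    intro N x
    simp only [dotProduct, mulVec, Finset.mul_sum]
    exact Finset.sum_congr rfl fun i _ => Finset.sum_congr rfl fun j _ => by ring
  -- key orthogonality identity
  have key : ∀ v w : Fin s → H, (∀ i, w i ∈ D) →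
      (∀ i, w i = v i + τ • ∑ j, A i j • M (w j)) →
      (∑ i, (inner ℝ (w i) (∑ j, B i j • w j) : ℝ)) =
        (∑ i, (inner ℝ (w i) (∑ j, B i j • v j) : ℝ)) := by
    intro v w hw heq
    have hdiff : ∀ i, (∑ j, B i j • w j) - (∑ j, B i j • v j) = (τ * k i) • M (w i) := by
      intro i
      rw [← Finset.sum_sub_distrib]
      have h2 : ∀ j, B i j • w j - B i j • v j = B i j • (τ • ∑ l, A j l • M (w l)) := by
        intro j
        rw [← smul_sub]
        congr 1
        rw [heq j]; abel
      simp_rw [h2]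
      calc ∑ j, B i j • (τ • ∑ l, A j l • M (w l))
          = ∑ j, ∑ l, (B i j * (τ * A j l)) • M (w l) := by
            simp only [Finset.smul_sum, smul_smul]
        _ = ∑ l, ∑ j, (B i j * (τ * A j l)) • M (w l) := Finset.sum_comm
        _ = ∑ l, (τ * (Matrix.diagonal k) i l) • M (w l) := by
            refine Finset.sum_congr rfl fun l _ => ?_
            rw [← Finset.sum_smul]
            congr 1
            rw [← hBA, Matrix.mul_apply, Finset.mul_sum]
            exact Finset.sum_congr rfl fun j _ => by ring
        _ = (τ * k i) • M (w i) := by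
            rw [Finset.sum_eq_single i]
            · rw [Matrix.diagonal_apply_eq]
            · intro l _ hl
              rw [Matrix.diagonal_apply_ne _ (Ne.symm hl), mul_zero, zero_smul]
            · intro h; exact absurd (Finset.mem_univ i) h
    have hzero : (∑ i, (inner ℝ (w i) (∑ j, B i j • w j) : ℝ)) -
        (∑ i, (inner ℝ (w i) (∑ j, B i j • v j) : ℝ)) = 0 := by
      rw [← Finset.sum_sub_distrib]
      refine Finset.sum_eq_zero fun i _ => ?_
      rw [← inner_sub_right, hdiff i, real_inner_smul_right]
      have h3 := hM (w i) (hw i)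
      rw [real_inner_comm] at h3
      rw [h3, mul_zero]
    linarith
  -- coercivity transferred to H-valued vectors
  have coer : ∀ w : Fin s → H,
      α * ∑ i, k i * ‖w i‖ ^ 2 ≤ ∑ i, ∑ j, B i j * (inner ℝ (w i) (w j) : ℝ) := by
    intro w
    set Cm := B - α • Matrix.diagonal k with hCmdef
    set Sm := (1/2 : ℝ) • (Cm + Cmᵀ) with hSmdef
    have hCmsum : ∀ (g : Fin s → Fin s → ℝ),
        ∑ i, ∑ j, Cm i j * g i j =
          (∑ i, ∑ j, B i j * g i j) - α * ∑ i, ∑ j, (Matrix.diagonal k) i j * g i j := by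
      intro g
      rw [Finset.mul_sum, ← Finset.sum_sub_distrib]
      refine Finset.sum_congr rfl fun i _ => ?_
      rw [Finset.mul_sum, ← Finset.sum_sub_distrib]
      refine Finset.sum_congr rfl fun j _ => ?_
      simp only [hCmdef, Matrix.sub_apply, Matrix.smul_apply, smul_eq_mul]
      ring
    have hSmsum : ∀ (g : Fin s → Fin s → ℝ), (∀ i j, g i j = g j i) →
        ∑ i, ∑ j, Sm i j * g i j = ∑ i, ∑ j, Cm i j * g i j := by
      intro g hg
      have ht : ∑ i, ∑ j, Cmᵀ i j * g i j = ∑ i, ∑ j, Cm i j * g i j := by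
        rw [Finset.sum_comm]
        exact Finset.sum_congr rfl fun j _ => Finset.sum_congr rfl fun i _ => by
          rw [Matrix.transpose_apply, hg i j]
      calc ∑ i, ∑ j, Sm i j * g i j
          = ∑ i, ∑ j, ((1/2 : ℝ) * (Cm i j * g i j) + (1/2) * (Cmᵀ i j * g i j)) := by
            refine Finset.sum_congr rfl fun i _ => Finset.sum_congr rfl fun j _ => ?_
            simp only [hSmdef, Matrix.smul_apply, Matrix.add_apply, smul_eq_mul]
            ring
        _ = (1/2) * (∑ i, ∑ j, Cm i j * g i j) + (1/2) * (∑ i, ∑ j, Cmᵀ i j * g i j) := by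
            simp only [Finset.sum_add_distrib, Finset.mul_sum]
        _ = ∑ i, ∑ j, Cm i j * g i j := by rw [ht]; ring
    have hSpsd : Sm.PosSemidef := by
      refine Matrix.PosSemidef.of_dotProduct_mulVec_nonneg ?_ ?_
      · show Smᴴ = Sm
        ext i j
        simp only [Matrix.conjTranspose_apply, star_trivial, hSmdef, hCmdef,
          Matrix.smul_apply, Matrix.add_apply, Matrix.transpose_apply, Matrix.sub_apply,
          smul_eq_mul]
        ring
      · intro x
        have hx : star x = x := by ext i; simp
        rw [hx, hquad]
        have h1 := hcoer x
        rw [hquad, hquad] at h1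
        rw [hSmsum (fun i j => x i * x j) (fun i j => by ring),
          hCmsum (fun i j => x i * x j)]
        linarith
    have hpsd := psd_sum_inner_nonneg hSpsd w
    rw [hSmsum (fun i j => (inner ℝ (w i) (w j) : ℝ)) (fun i j => real_inner_comm _ _),
      hCmsum (fun i j => (inner ℝ (w i) (w j) : ℝ))] at hpsd
    have ediag : ∑ i, ∑ j, (Matrix.diagonal k) i j * (inner ℝ (w i) (w j) : ℝ)
        = ∑ i, k i * ‖w i‖ ^ 2 := by
      refine Finset.sum_congr rfl fun i _ => ?_
      rw [Finset.sum_eq_single i]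
      · rw [Matrix.diagonal_apply_eq, real_inner_self_eq_norm_sq]
      · intro l _ hl
        rw [Matrix.diagonal_apply_ne _ (Ne.symm hl), zero_mul]
      · intro h; exact absurd (Finset.mem_univ i) h
    rw [ediag] at hpsd
    linarith
  -- lower bound
  have lower : ∀ v w : Fin s → H, (∀ i, w i ∈ D) →
      (∀ i, w i = v i + τ • ∑ j, A i j • M (w j)) →
      α * m * (∑ i, ‖w i‖ ^ 2) ≤ ∑ i, (inner ℝ (w i) (∑ j, B i j • v j) : ℝ) := by
    intro v w hw heq
    have h2 : α * m * (∑ i, ‖w i‖ ^ 2) ≤ α * ∑ i, k i * ‖w i‖ ^ 2 := by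
      rw [mul_assoc, Finset.mul_sum, Finset.mul_sum, Finset.mul_sum]
      refine Finset.sum_le_sum fun i _ => ?_
      have hle : m * ‖w i‖ ^ 2 ≤ k i * ‖w i‖ ^ 2 :=
        mul_le_mul_of_nonneg_right (Finset.inf'_le _ (Finset.mem_univ i)) (sq_nonneg _)
      exact mul_le_mul_of_nonneg_left hle hα.le
    calc α * m * (∑ i, ‖w i‖ ^ 2) ≤ α * ∑ i, k i * ‖w i‖ ^ 2 := h2
      _ ≤ ∑ i, ∑ j, B i j * (inner ℝ (w i) (w j) : ℝ) := coer w
      _ = ∑ i, (inner ℝ (w i) (∑ j, B i j • w j) : ℝ) := (hexp w w).symm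
      _ = ∑ i, (inner ℝ (w i) (∑ j, B i j • v j) : ℝ) := key v w hw heq
  have hm : 0 < m := (Finset.lt_inf'_iff _).2 fun i _ => hk i
  refine ⟨fun v w hv hw heq => ⟨key v w hw heq, lower v w hw heq⟩, ?_⟩
  -- the norm estimate
  set c := ∑ i : Fin s, ∑ j : Fin s, |B i j| with hcdef
  have hc0 : 0 ≤ c := Finset.sum_nonneg fun i _ => Finset.sum_nonneg fun j _ => abs_nonneg _
  refine ⟨(c + 1) / (α * m), by positivity, fun v w hv hw heq => ?_⟩
  set X := Real.sqrt (∑ i, ‖w i‖ ^ 2) with hXdef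
  set Y := Real.sqrt (∑ i, ‖v i‖ ^ 2) with hYdef
  have hX0 : 0 ≤ X := Real.sqrt_nonneg _
  have hY0 : 0 ≤ Y := Real.sqrt_nonneg _
  have hXsq : X ^ 2 = ∑ i, ‖w i‖ ^ 2 :=
    Real.sq_sqrt (by positivity)
  have hYsq : Y ^ 2 = ∑ i, ‖v i‖ ^ 2 :=
    Real.sq_sqrt (by positivity)
  have hwX : ∀ i, ‖w i‖ ≤ X := by
    intro i
    have h1 : ‖w i‖ ^ 2 ≤ X ^ 2 := by
      rw [hXsq]
      exact Finset.single_le_sum (f := fun j => ‖w j‖ ^ 2)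
        (fun j _ => sq_nonneg _) (Finset.mem_univ i)
    calc ‖w i‖ = Real.sqrt (‖w i‖ ^ 2) := (Real.sqrt_sq (norm_nonneg _)).symm
      _ ≤ Real.sqrt (X ^ 2) := Real.sqrt_le_sqrt h1
      _ = X := Real.sqrt_sq hX0
  have hvY : ∀ i, ‖v i‖ ≤ Y := by
    intro i
    have h1 : ‖v i‖ ^ 2 ≤ Y ^ 2 := by
      rw [hYsq]
      exact Finset.single_le_sum (f := fun j => ‖v j‖ ^ 2)
        (fun j _ => sq_nonneg _) (Finset.mem_univ i)
    calc ‖v i‖ = Real.sqrt (‖v i‖ ^ 2) := (Real.sqrt_sq (norm_nonneg _)).symm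
      _ ≤ Real.sqrt (Y ^ 2) := Real.sqrt_le_sqrt h1
      _ = Y := Real.sqrt_sq hY0
  have hbound : (∑ i, (inner ℝ (w i) (∑ j, B i j • v j) : ℝ)) ≤ c * (X * Y) := by
    rw [hexp, hcdef, Finset.sum_mul]
    refine Finset.sum_le_sum fun i _ => ?_
    rw [Finset.sum_mul]
    refine Finset.sum_le_sum fun j _ => ?_
    calc B i j * (inner ℝ (w i) (v j) : ℝ) ≤ |B i j * (inner ℝ (w i) (v j) : ℝ)| := le_abs_self _
      _ = |B i j| * |(inner ℝ (w i) (v j) : ℝ)| := abs_mul _ _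
      _ ≤ |B i j| * (‖w i‖ * ‖v j‖) :=
          mul_le_mul_of_nonneg_left (abs_real_inner_le_norm _ _) (abs_nonneg _)
      _ ≤ |B i j| * (X * Y) :=
          mul_le_mul_of_nonneg_left
            (mul_le_mul (hwX i) (hvY j) (norm_nonneg _) hX0) (abs_nonneg _)
  have hmain : α * m * X ^ 2 ≤ c * (X * Y) := by
    rw [hXsq]
    exact le_trans (lower v w hw heq) hbound
  rcases eq_or_lt_of_le hX0 with hX | hX
  · rw [← hX]; positivity
  · rw [div_mul_eq_mul_div, le_div_iff₀ (by positivity)]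
    nlinarith [mul_nonneg hX0 hY0]
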